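/- Let X be a connected graph with finite maximum degree such that there is an increasing sequence (r_n) with β_x(r_n) ≥ 2^{√(r_n)/4} for all n ∈ ℕ and all x ∈ X. Then for every ε > 0 there exists R ∈ ℕ such that ε·β_x(r) > r for all r ≥ R and all x ∈ X. -/

import Mathlib

open SimpleGraph Filter Real

section AuxGrowth

variable {V : Type*} {G : SimpleGraph V} {u v : V}

/-- Split a walk at the `n`-th vertex. -/
private lemma walk_split' (p : G.Walk u v) (n : ℕ) :
    ∃ (q : G.Walk u (p.getVert n)) (q' : G.Walk (p.getVert n) v),
      q.length = min n p.length ∧ q'.length = p.length - min n p.length := by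
  induction p generalizing n with
  | nil =>
    refine ⟨Walk.nil.copy rfl (Walk.getVert_of_length_le _ (by simp)).symm,
      Walk.nil.copy (Walk.getVert_of_length_le _ (by simp)).symm rfl, by simp, by simp⟩
  | cons h p ih =>
    cases n with
    | zero =>
      exact ⟨Walk.nil.copy rfl (Walk.getVert_zero _).symm,
        (Walk.cons h p).copy (Walk.getVert_zero _).symm rfl, by simp, by simp⟩
    | succ n =>
      obtain ⟨q, q', hq, hq'⟩ := ih n
      refine ⟨(Walk.cons h q).copy rfl (Walk.getVert_cons_succ p h).symm,
        q'.copy (Walk.getVert_cons_succ p h).symm rfl, ?_, ?_⟩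
      · simp [hq, Walk.length_cons]
      · simp [hq', Walk.length_cons]

private lemma dist_getVert_le' (p : G.Walk u v) (n : ℕ) : G.dist u (p.getVert n) ≤ n := by
  obtain ⟨q, _, hq, _⟩ := walk_split' p n
  exact (SimpleGraph.dist_le q).trans (by omega)

private lemma dist_getVert_eq' (hconn : G.Connected) (p : G.Walk u v)
    (hp : p.length = G.dist u v) {n : ℕ} (hn : n ≤ p.length) :
    G.dist u (p.getVert n) = n := by
  obtain ⟨q, q', hq, hq'⟩ := walk_split' p n
  have h1 := SimpleGraph.dist_le q
  have h2 := SimpleGraph.dist_le q'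
  have h3 := hconn.dist_triangle (u := u) (v := p.getVert n) (w := v)
  rw [min_eq_left hn] at hq hq'
  omega

private lemma ball_finite' (hconn : G.Connected) (hlf : G.LocallyFinite) (x : V) :
    ∀ r : ℕ, {z : V | G.dist x z ≤ r}.Finite := by
  intro r
  induction r with
  | zero =>
    refine (Set.finite_singleton x).subset fun z hz => ?_
    simp only [Set.mem_setOf_eq, Nat.le_zero] at hz
    simp [Set.mem_singleton_iff, (hconn.dist_eq_zero_iff.mp hz).symm]
  | succ r ih =>
    refine ((ih.union (ih.biUnion fun y _ => (G.neighborSet y).toFinite))).subset fun z hz => ?_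
    simp only [Set.mem_setOf_eq] at hz
    rcases le_or_gt (G.dist x z) r with h | h
    · exact Or.inl h
    obtain ⟨p, hp⟩ := exists_walk_of_dist_ne_zero (by omega : G.dist x z ≠ 0)
    have hlen : p.length = r + 1 := by omega
    refine Or.inr (Set.mem_iUnion₂.mpr ⟨p.getVert r, dist_getVert_le' p r, ?_⟩)
    have hadj := p.adj_getVert_succ (i := r) (by omega)
    have hz' : p.getVert (r + 1) = z := by rw [← hlen]; exact p.getVert_length
    rwa [hz'] at hadj

private lemma infinite_of_growth' (hconn : G.Connected) (rseq : ℕ → ℕ)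
    (hmono : StrictMono rseq)
    (hlow : ∀ n : ℕ, ∀ x : V,
      (2 : ℝ) ^ (Real.sqrt (rseq n) / 4) ≤ ({z : V | G.dist x z ≤ rseq n}.ncard : ℝ))
    [Nonempty V] : Infinite V := by
  by_contra hfin
  rw [not_infinite_iff_finite] at hfin
  set c := Nat.card V with hc
  obtain ⟨x⟩ := ‹Nonempty V›
  set n := 16 * (c + 1) ^ 2 with hn
  have h1 : (n : ℝ) ≤ (rseq n : ℝ) := by exact_mod_cast hmono.le_apply
  have hsqrtn : Real.sqrt n = 4 * (c + 1) := by
    have : (n : ℝ) = (4 * ((c:ℝ) + 1)) ^ 2 := by push_cast [hn]; ring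
    rw [this, Real.sqrt_sq (by positivity)]
  have hsqrt : (4 : ℝ) * (c + 1) ≤ Real.sqrt (rseq n) := by
    rw [← hsqrtn]; exact Real.sqrt_le_sqrt h1
  have h2 : (2 : ℝ) ^ ((c : ℝ) + 1) ≤ (2 : ℝ) ^ (Real.sqrt (rseq n) / 4) :=
    Real.rpow_le_rpow_of_exponent_le one_le_two (by linarith)
  have h3 : (c : ℝ) < (2 : ℝ) ^ ((c : ℝ) + 1) := by
    have hlt := Nat.lt_two_pow_self (n := c)
    have h4 : ((2:ℝ)) ^ ((c:ℝ) + 1) = ((2 ^ (c+1) : ℕ) : ℝ) := by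
      push_cast
      rw [← Real.rpow_natCast 2 (c+1)]
      push_cast; ring_nf
    rw [h4]
    exact_mod_cast lt_of_lt_of_le hlt (Nat.pow_le_pow_right (by norm_num) (by omega))
  have h5 := hlow n x
  have h6 : ({z : V | G.dist x z ≤ rseq n}.ncard : ℝ) ≤ c := by
    have := Set.ncard_le_ncard (Set.subset_univ {z : V | G.dist x z ≤ rseq n}) Set.finite_univ
    rw [Set.ncard_univ] at this
    exact_mod_cast this
  linarith

private lemma tendsto_growth' :
    Tendsto (fun t : ℕ => (2:ℝ) ^ (Real.sqrt t / 4) / t) atTop atTop := by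
  have hsq : Tendsto (fun t : ℕ => Real.sqrt t) atTop atTop := by
    rw [tendsto_atTop_atTop]
    intro b
    refine ⟨(⌈max b 0⌉₊) ^ 2, fun t ht => ?_⟩
    have h1 : ((⌈max b 0⌉₊ ^ 2 : ℕ) : ℝ) ≤ (t : ℝ) := by exact_mod_cast ht
    have h2 := Real.sqrt_le_sqrt h1
    rw [show ((⌈max b 0⌉₊ ^ 2 : ℕ) : ℝ) = ((⌈max b 0⌉₊ : ℝ)) ^ 2 by push_cast; ring,
      Real.sqrt_sq (by positivity)] at h2
    calc b ≤ max b 0 := le_max_left _ _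
      _ ≤ ⌈max b 0⌉₊ := Nat.le_ceil _
      _ ≤ Real.sqrt t := h2
  have h1 := tendsto_exp_mul_div_rpow_atTop 2 (Real.log 2 / 4) (by positivity)
  refine (h1.comp hsq).congr' ?_
  filter_upwards [eventually_ge_atTop 1] with t ht
  have ht0 : (0:ℝ) < t := by exact_mod_cast ht
  simp only [Function.comp_apply]
  rw [Real.rpow_two, Real.sq_sqrt ht0.le, Real.rpow_def_of_pos two_pos]
  ring_nf

end AuxGrowth

/-- If a connected graph with finite maximum degree satisfies the uniform lower growth
bound `β_x(r_n) ≥ 2^(√(r_n)/4)` along an increasing sequence `r_n`, then for every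
`ε > 0` there is `R` with `ε * β_x(r) > r` for all `r ≥ R` and all `x`. -/
theorem stmt_8 {V : Type*} (G : SimpleGraph V) (hconn : G.Connected)
    (hlf : G.LocallyFinite) (Δ : ℕ) (hdeg : ∀ v : V, G.degree v ≤ Δ)
    (rseq : ℕ → ℕ) (hmono : StrictMono rseq)
    (hlow : ∀ n : ℕ, ∀ x : V,
      (2 : ℝ) ^ (Real.sqrt (rseq n) / 4) ≤ ({z : V | G.dist x z ≤ rseq n}.ncard : ℝ)) :
    ∀ ε : ℝ, 0 < ε → ∃ R : ℕ, ∀ x : V, ∀ r : ℕ, R ≤ r →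
      (r : ℝ) < ε * ({z : V | G.dist x z ≤ r}.ncard : ℝ) := by
  classical
  intro ε hε
  cases isEmpty_or_nonempty V with
  | inl h => exact ⟨0, fun x => (h.false x).elim⟩
  | inr hne =>
  haveI : Infinite V := infinite_of_growth' hconn rseq hmono hlow
  obtain ⟨N, hN⟩ := Filter.tendsto_atTop_atTop.mp tendsto_growth' (7 / ε)
  set n := max N 1 with hn
  set s := rseq n with hs
  have hs1 : 1 ≤ s := le_trans (le_max_right N 1) hmono.le_apply
  have hsN : N ≤ s := le_trans (le_max_left N 1) hmono.le_apply
  set A := (2:ℝ) ^ (Real.sqrt s / 4) with hA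
  have hA7 : 7 / ε ≤ A / s := hN s hsN
  have hA0 : (0:ℝ) < A := Real.rpow_pos_of_pos two_pos _
  have hs0 : (0:ℝ) < (s:ℝ) := by exact_mod_cast hs1
  have hkey : 2 * (2 * (s:ℝ) + 1) ≤ ε * A := by
    rw [div_le_div_iff₀ hε hs0] at hA7
    have h1 : (1:ℝ) ≤ (s:ℝ) := by exact_mod_cast hs1
    nlinarith
  refine ⟨2 * s + 1, fun x r hr => ?_⟩
  obtain ⟨z, hz⟩ : ∃ z, ¬ G.dist x z ≤ r := by
    obtain ⟨z, hz⟩ := ((ball_finite' hconn hlf x r).infinite_compl).nonempty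
    exact ⟨z, hz⟩
  obtain ⟨p, hp⟩ := hconn.exists_walk_length_eq_dist x z
  have hrp : r ≤ p.length := by omega
  set D := 2 * s + 1 with hD
  set m := (r - s) / D with hm
  have hsr : s ≤ r := by omega
  have hmD : m * D ≤ r - s := Nat.div_mul_le_self _ _
  have hcenter : ∀ i, i ≤ m → i * D ≤ p.length := fun i hi =>
    le_trans (le_trans (Nat.mul_le_mul_right _ hi) hmD) (le_trans (Nat.sub_le _ _) hrp)
  set c : ℕ → V := fun i => p.getVert (i * D) with hcdef
  have hdistc : ∀ i, i ≤ m → G.dist x (c i) = i * D := fun i hi =>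
    dist_getVert_eq' hconn p hp (hcenter i hi)
  set f : ℕ → Finset V := fun i => (ball_finite' hconn hlf (c i) s).toFinset with hfdef
  set F : Finset V := (ball_finite' hconn hlf x r).toFinset with hFdef
  have hsub : ∀ i ∈ Finset.range (m+1), f i ⊆ F := by
    intro i hi w hw
    have hi' : i ≤ m := by simpa [Nat.lt_succ_iff] using Finset.mem_range.mp hi
    simp only [hfdef, hFdef, Set.Finite.mem_toFinset, Set.mem_setOf_eq] at hw ⊢
    have h1 := hconn.dist_triangle (u := x) (v := c i) (w := w)
    have h2 := hdistc i hi'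
    have h3 : i * D ≤ r - s := le_trans (Nat.mul_le_mul_right _ hi') hmD
    omega
  have hdisj' : ∀ i j, i < j → j ≤ m → Disjoint (f i) (f j) := by
    intro i j hij hj
    rw [Finset.disjoint_left]
    intro w hwi hwj
    simp only [hfdef, Set.Finite.mem_toFinset, Set.mem_setOf_eq] at hwi hwj
    have t1 := hconn.dist_triangle (u := c i) (v := w) (w := c j)
    have t2 := hconn.dist_triangle (u := x) (v := c i) (w := c j)
    have e1 := hdistc i (by omega)
    have e2 := hdistc j hj
    have hcomm : G.dist w (c j) = G.dist (c j) w := SimpleGraph.dist_comm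
    have hstep : i * D + D ≤ j * D := by
      have h := Nat.mul_le_mul_right D (show i + 1 ≤ j by omega)
      have : (i + 1) * D = i * D + D := by ring
      omega
    omega
  have hdisj : ∀ i ∈ Finset.range (m+1), ∀ j ∈ Finset.range (m+1), i ≠ j →
      Disjoint (f i) (f j) := by
    intro i hi j hj hne
    rcases lt_or_gt_of_ne hne with h | h
    · exact hdisj' i j h (by simpa [Nat.lt_succ_iff] using Finset.mem_range.mp hj)
    · exact (hdisj' j i h (by simpa [Nat.lt_succ_iff] using Finset.mem_range.mp hi)).symm
  have hcard : ∑ i ∈ Finset.range (m+1), (f i).card ≤ F.card := by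
    rw [← Finset.card_biUnion hdisj]
    exact Finset.card_le_card (Finset.biUnion_subset.mpr hsub)
  have hlow' : ∀ i ∈ Finset.range (m+1), A ≤ ((f i).card : ℝ) := by
    intro i _
    have h := hlow n (c i)
    rwa [Set.ncard_eq_toFinset_card _ (ball_finite' hconn hlf (c i) s)] at h
  have hsum : ((m:ℝ) + 1) * A ≤ (F.card : ℝ) := by
    calc ((m:ℝ) + 1) * A = (Finset.range (m+1)).card • A := by
          rw [Finset.card_range]; push_cast [nsmul_eq_mul]; ring
      _ ≤ ∑ i ∈ Finset.range (m+1), ((f i).card : ℝ) := Finset.card_nsmul_le_sum _ _ _ hlow'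
      _ = ((∑ i ∈ Finset.range (m+1), (f i).card : ℕ) : ℝ) := by push_cast; rfl
      _ ≤ (F.card : ℝ) := by exact_mod_cast hcard
  have hball : ({z : V | G.dist x z ≤ r}.ncard : ℝ) = (F.card : ℝ) := by
    rw [hFdef, Set.ncard_eq_toFinset_card _ (ball_finite' hconn hlf x r)]
  rw [hball]
  have hnat : r - s + 1 ≤ (m + 1) * D := by
    have h := Nat.div_add_mod (r - s) D
    rw [← hm] at h
    have h2 : (r - s) % D < D := Nat.mod_lt _ (by omega)
    have h3 : (m + 1) * D = D * m + D := by ring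
    omega
  have hcastD : ((r:ℝ) - s) + 1 ≤ ((m:ℝ) + 1) * (2 * (s:ℝ) + 1) := by
    have h : ((r - s + 1 : ℕ) : ℝ) ≤ (((m + 1) * D : ℕ) : ℝ) := by exact_mod_cast hnat
    rw [Nat.cast_add, Nat.cast_sub hsr] at h
    push_cast [hD] at h
    nlinarith
  have hrcast : 2 * (s:ℝ) + 1 ≤ (r:ℝ) := by exact_mod_cast hr
  have hm0 : (0:ℝ) ≤ (m:ℝ) := Nat.cast_nonneg _
  nlinarith [mul_le_mul_of_nonneg_left hsum hε.le,
    mul_le_mul_of_nonneg_left hkey (show (0:ℝ) ≤ (m:ℝ) + 1 by linarith)]
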